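/- Let (A, X) be an ldz-algebra, i.e., A is a Boolean algebra, X ⊆ S(A) is dense, X ∩ s_A(A) = CO(X) (where s_A(a) = {x ∈ S(A) : x(a) = 1} and CO(X) is computed in the subspace topology on X), and X is open in S(A). Then I_X := {a ∈ A : s_A(a) ⊆ X} is a dense ideal of A, meaning: I_X is an ideal, and for every nonzero b ∈ A there exists nonzero a ∈ I_X with a ≤ b. -/

import Mathlib

def sA {A : Type*} [BooleanAlgebra A] (a : A) : Set (BoundedLatticeHom A Bool) :=
  {x | x a = true}

instance stoneTopology (A : Type*) [BooleanAlgebra A] :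
    TopologicalSpace (BoundedLatticeHom A Bool) :=
  TopologicalSpace.generateFrom (Set.range (sA (A := A)))

open Classical in
/-- The Boolean prime ideal theorem: every nonzero element is sent to `true`
by some bounded lattice homomorphism into `Bool`. -/
lemma exists_hom_of_ne_bot {A : Type*} [BooleanAlgebra A] {b : A} (hb : b ≠ ⊥) :
    ∃ x : BoundedLatticeHom A Bool, x b = true := by
  have hdisj : Disjoint ((Order.PFilter.principal b : Order.PFilter A) : Set A)
      ((Order.Ideal.principal (⊥ : A) : Order.Ideal A) : Set A) := by
    rw [Set.disjoint_left]
    intro c hc hc'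
    have h1 : b ≤ c := hc
    have h2 : c ≤ ⊥ := hc'
    exact hb (le_bot_iff.mp (h1.trans h2))
  obtain ⟨J, hJprime, _, hJdisj⟩ :=
    DistribLattice.prime_ideal_of_disjoint_filter_ideal hdisj
  have hbJ : b ∉ J := by
    intro h
    exact Set.disjoint_left.mp hJdisj (Order.PFilter.mem_principal.mpr le_rfl) h
  have hproper : (⊤ : A) ∉ J := by
    intro h
    exact hbJ (J.lower le_top h)
  refine ⟨⟨⟨⟨fun a => decide (a ∉ J), ?_⟩, ?_⟩, ?_, ?_⟩, ?_⟩
  · intro a c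
    simp only [Bool.sup_eq_bor]
    rcases Classical.em (a ∈ J) with ha | ha <;> rcases Classical.em (c ∈ J) with hc | hc
    · have : a ⊔ c ∈ J := J.sup_mem ha hc
      simp [ha, hc, this]
    · have : a ⊔ c ∉ J := fun h => hc (J.lower le_sup_right h)
      simp [ha, hc, this]
    · have : a ⊔ c ∉ J := fun h => ha (J.lower le_sup_left h)
      simp [ha, hc, this]
    · have : a ⊔ c ∉ J := fun h => ha (J.lower le_sup_left h)
      simp [ha, hc, this]
  · intro a c
    simp only [Bool.inf_eq_band]
    rcases Classical.em (a ∈ J) with ha | ha <;> rcases Classical.em (c ∈ J) with hc | hc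
    · have : a ⊓ c ∈ J := J.lower inf_le_left ha
      simp [ha, hc, this]
    · have : a ⊓ c ∈ J := J.lower inf_le_left ha
      simp [ha, hc, this]
    · have : a ⊓ c ∈ J := J.lower inf_le_right hc
      simp [ha, hc, this]
    · have : a ⊓ c ∉ J := fun h => by
        rcases hJprime.mem_or_mem h with h' | h'
        exacts [ha h', hc h']
      simp [ha, hc, this]
  · simp [hproper]
  · simp [J.bot_mem]
  · simp [hbJ]

lemma sA_top {A : Type*} [BooleanAlgebra A] : sA (⊤ : A) = Set.univ := by
  ext x; simp [sA, map_top]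

lemma sA_inf {A : Type*} [BooleanAlgebra A] (a b : A) :
    sA (a ⊓ b) = sA a ∩ sA b := by
  ext x
  simp [sA, map_inf, Bool.inf_eq_band, Bool.and_eq_true]

lemma isBasis_sA {A : Type*} [BooleanAlgebra A] :
    TopologicalSpace.IsTopologicalBasis (Set.range (sA (A := A))) := by
  refine ⟨?_, ?_, rfl⟩
  · rintro _ ⟨a, rfl⟩ _ ⟨b, rfl⟩ x hx
    exact ⟨sA (a ⊓ b), ⟨a ⊓ b, rfl⟩, by rwa [sA_inf], by rw [sA_inf]⟩
  · apply Set.eq_univ_of_univ_subset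
    rw [← sA_top (A := A)]
    exact Set.subset_sUnion_of_mem ⟨⊤, rfl⟩

lemma isOpen_sA {A : Type*} [BooleanAlgebra A] (a : A) : IsOpen (sA a) :=
  isBasis_sA.isOpen ⟨a, rfl⟩

/-- if `(A, X)` is an ldz-algebra (`X ⊆ S(A)` dense, `X ∩ s_A(A) = CO(X)`
in the subspace topology, and `X` open), then `I_X = {a : s_A(a) ⊆ X}` is a dense ideal
of `A`. -/
theorem stmt10 {A : Type*} [BooleanAlgebra A] (X : Set (BoundedLatticeHom A Bool))
    (hdense : Dense X)
    (hdz : {V : Set X | IsClopen V} = {V : Set X | ∃ a : A, V = Subtype.val ⁻¹' sA a})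
    (hopen : IsOpen X) :
    (⊥ : A) ∈ {a : A | sA a ⊆ X} ∧
    (∀ a b : A, a ≤ b → b ∈ {a : A | sA a ⊆ X} → a ∈ {a : A | sA a ⊆ X}) ∧
    (∀ a ∈ {a : A | sA a ⊆ X}, ∀ b ∈ {a : A | sA a ⊆ X}, a ⊔ b ∈ {a : A | sA a ⊆ X}) ∧
    (∀ b : A, b ≠ ⊥ → ∃ a ∈ {a : A | sA a ⊆ X}, a ≠ ⊥ ∧ a ≤ b) := by
  refine ⟨?_, ?_, ?_, ?_⟩
  · intro x hx
    simp [sA, map_bot] at hx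
  · intro a b hab hb x hx
    apply hb
    have : x a = true := hx
    have h1 : x a ≤ x b := OrderHomClass.mono x hab
    simp only [sA, Set.mem_setOf_eq]
    rw [this] at h1
    exact le_antisymm le_top h1
  · intro a ha b hb x hx
    have : x (a ⊔ b) = true := hx
    rw [map_sup, Bool.max_eq_or, Bool.or_eq_true] at this
    rcases this with h | h
    · exact ha h
    · exact hb h
  · intro b hb
    obtain ⟨x, hx⟩ := exists_hom_of_ne_bot hb
    have hne : (sA b ∩ X).Nonempty := by
      rcases (hdense.inter_open_nonempty (sA b) (isOpen_sA b) ⟨x, hx⟩) with ⟨y, hy1, hy2⟩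
      exact ⟨y, hy1, hy2⟩
    obtain ⟨y, hyb, hyX⟩ := hne
    obtain ⟨U, ⟨a, rfl⟩, hyU, hUX⟩ :=
      isBasis_sA.exists_subset_of_mem_open hyX hopen
    refine ⟨a ⊓ b, ?_, ?_, inf_le_right⟩
    · intro z hz
      rw [sA_inf] at hz
      exact hUX hz.1
    · intro h
      have : y ∈ sA (a ⊓ b) := by rw [sA_inf]; exact ⟨hyU, hyb⟩
      rw [h] at this
      simp [sA, map_bot] at this
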